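/- Let r be a positive integer and a an integer with 1 ≤ a ≤ r and gcd(r, a−1) = 1. Set w := gcd(r,a) and ℓ := r/w. Then ℓ divides w if and only if there exist positive integers n, d, c with gcd(d,c) = 1, r = n·d² and a = n·d·c. (Equivalently: the cone with u = (0,1), v = (r,1−a) has empty residue, i.e. its width is an integer multiple of its local index, if and only if it corresponds to a T-singularity 1/(nd²)(1, ndc − 1) with gcd(d,c) = 1; and in that case necessarily d = ℓ and w = nℓ.) -/

import Mathlib

/-- For `1 ≤ a ≤ r` with `gcd(r, a-1) = 1`, `w = gcd(r,a)`, `ℓ = r/w`: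
`ℓ ∣ w` (i.e. the cone has empty residue) if and only if there exist positive
integers `n, d, c` with `gcd(d,c) = 1`, `r = nd²` and `a = ndc` (i.e. the cone
corresponds to a T-singularity `1/(nd²)(1, ndc - 1)`). -/
theorem stmt_8 (r a : ℤ) (hr : 0 < r) (ha1 : 1 ≤ a) (har : a ≤ r)
    (hra : Int.gcd r (a - 1) = 1)
    (w l : ℤ) (hw : w = Int.gcd r a) (hl : l = r / w) :
    l ∣ w ↔ ∃ n d c : ℤ, 0 < n ∧ 0 < d ∧ 0 < c ∧ Int.gcd d c = 1 ∧
      r = n * d ^ 2 ∧ a = n * d * c := by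
  have hgpos : 0 < Int.gcd r a := Int.gcd_pos_of_ne_zero_left a hr.ne'
  have hwpos : 0 < w := by rw [hw]; exact_mod_cast hgpos
  have hwr : w ∣ r := by rw [hw]; exact Int.gcd_dvd_left _ _
  have hwa : w ∣ a := by rw [hw]; exact Int.gcd_dvd_right _ _
  have hrwl : r = w * l := by rw [hl, Int.mul_ediv_cancel' hwr]
  have hlpos : 0 < l := by nlinarith
  constructor
  · rintro ⟨n, hn⟩
    have hnpos : 0 < n := by nlinarith
    refine ⟨n, l, a / w, hnpos, hlpos, ?_, ?_, by rw [hrwl, hn]; ring, ?_⟩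
    · have : a = w * (a / w) := (Int.mul_ediv_cancel' hwa).symm
      nlinarith
    · have := Int.gcd_div_gcd_div_gcd (i := r) (j := a) hgpos
      rw [hl, hw]; exact this
    · have : a = w * (a / w) := (Int.mul_ediv_cancel' hwa).symm
      linear_combination this + (a / w) * hn
  · rintro ⟨n, d, c, hn, hd, hc, hgcd, hrnd, handc⟩
    have hnd : (0:ℤ) < n * d := mul_pos hn hd
    have hw2 : w = n * d := by
      have h1 : r = (n * d) * d := by rw [hrnd]; ring
      have h2 : a = (n * d) * c := by rw [handc]
      rw [hw, h1, h2, Int.gcd_mul_left, hgcd, mul_one,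
        Nat.cast_natAbs]
      · exact abs_of_pos hnd
    have hld : l = d := by
      rw [hl, hw2, hrnd]
      rw [show n * d ^ 2 = (n * d) * d by ring, Int.mul_ediv_cancel_left _ hnd.ne']
    exact ⟨n, by rw [hw2, hld]; ring⟩
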